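/- Let M = [[1, (3/2)a, (3/2)b], [(3/2)a, 3, 0], [(3/2)b, 0, 3]] with a, b ∈ {-1, 0, 1} and a + b ≥ -1. Then M is strictly copositive: xᵀMx > 0 for all nonzero x ∈ ℝ³ with nonnegative entries. -/

import Mathlib

set_option maxHeartbeats 1000000 in
theorem stmt_11 (a b : ℝ) (ha : a ∈ ({-1, 0, 1} : Set ℝ)) (hb : b ∈ ({-1, 0, 1} : Set ℝ))
    (hab : a + b ≥ -1) :
    ∀ x : Fin 3 → ℝ, (∀ i, 0 ≤ x i) → x ≠ 0 →
      0 < dotProduct x (Matrix.mulVec (!![1, (3/2)*a, (3/2)*b; (3/2)*a, 3, 0; (3/2)*b, 0, 3] : Matrix (Fin 3) (Fin 3) ℝ) x) := by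
  intro x hx hne
  have h0 := hx 0
  have h1 := hx 1
  have h2 := hx 2
  have hpos : 0 < x 0 ∨ 0 < x 1 ∨ 0 < x 2 := by
    by_contra h
    push_neg at h
    obtain ⟨p0, p1, p2⟩ := h
    apply hne
    funext i
    fin_cases i <;> simp <;> linarith
  have hq : dotProduct x (Matrix.mulVec
      (!![1, (3/2)*a, (3/2)*b; (3/2)*a, 3, 0; (3/2)*b, 0, 3] : Matrix (Fin 3) (Fin 3) ℝ) x)
      = x 0 ^ 2 + 3 * x 1 ^ 2 + 3 * x 2 ^ 2 + 3 * a * (x 0 * x 1) + 3 * b * (x 0 * x 2) := by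
    simp [dotProduct, Matrix.mulVec, Fin.sum_univ_three]
    ring
  rw [hq]
  simp only [Set.mem_insert_iff, Set.mem_singleton_iff] at ha hb
  rcases ha with rfl | rfl | rfl <;> rcases hb with rfl | rfl | rfl <;>
    first
      | linarith
      | (rcases hpos with hp | hp | hp <;>
          nlinarith [sq_nonneg (x 0 - 3/2 * x 1), sq_nonneg (x 0 - 3/2 * x 2),
            sq_nonneg (x 1), sq_nonneg (x 2), sq_nonneg (x 0),
            mul_nonneg h0 h1, mul_nonneg h0 h2, mul_nonneg h1 h2, mul_pos hp hp])
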